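/- arXiv:2510.02948 — 7 statements merged into one kernel-verified Lean document; each statement's English description precedes it below -/
import Mathlib

section
/- Let Q be a symmetric n×n real matrix, d ∈ ℝⁿ, A ∈ ℝ^{m×n}, b ∈ ℝᵐ, x̄ ∈ ℝⁿ, ν_R ∈ ℝ and c ∈ ℝⁿ. Suppose there exist a positive semidefinite matrix S ∈ 𝒮^{n+1} and an entrywise nonnegative matrix T ∈ ℝ^{(m+2)×(m+2)} such that [Q, d; dᵀ, −ν_R] = S + Bᵀ T B, where B ∈ ℝ^{(m+2)×(n+1)} is the block matrix with rows [−A, b], [0ᵀ, 1] and [−cᵀ, 1 + cᵀx̄]. Then for every x ∈ ℝⁿ with Ax ≤ b and cᵀ(x − x̄) ≤ 1 one has xᵀQx + 2dᵀx ≥ ν_R. -/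
open Matrix

/-- The `(n+1) × (n+1)` symmetric matrix `[Q, d; dᵀ, −ν]`. -/
noncomputable def objMat {n : ℕ} (Q : Matrix (Fin n) (Fin n) ℝ) (d : Fin n → ℝ)
    (ν : ℝ) : Matrix (Fin n ⊕ Unit) (Fin n ⊕ Unit) ℝ :=
  Matrix.of fun i j =>
    match i, j with
    | Sum.inl i, Sum.inl j => Q i j
    | Sum.inl i, Sum.inr _ => d i
    | Sum.inr _, Sum.inl j => d j
    | Sum.inr _, Sum.inr _ => -ν

/-- The `(m+2) × (n+1)` block matrix `B` with row blocks `[−A, b]`, `[0ᵀ, 1]` and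
`[−cᵀ, 1 + cᵀx̄]`. -/
noncomputable def cutMat {n m : ℕ} (A : Matrix (Fin m) (Fin n) ℝ) (b : Fin m → ℝ)
    (c xbar : Fin n → ℝ) : Matrix ((Fin m ⊕ Unit) ⊕ Unit) (Fin n ⊕ Unit) ℝ :=
  Matrix.of fun i j =>
    match i, j with
    | Sum.inl (Sum.inl i), Sum.inl j => -A i j
    | Sum.inl (Sum.inl i), Sum.inr _ => b i
    | Sum.inl (Sum.inr _), Sum.inl _ => 0
    | Sum.inl (Sum.inr _), Sum.inr _ => 1
    | Sum.inr _, Sum.inl j => -c j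
    | Sum.inr _, Sum.inr _ => 1 + c ⬝ᵥ xbar

/-- Lemma `l:S1S2`. If `[Q, d; dᵀ, −ν_R] = S + Bᵀ T B` with `S ⪰ 0`
and `T ≥ 0` entrywise, then `c` is a valid cut: every `x` with `Ax ≤ b` and
`cᵀ(x − x̄) ≤ 1` satisfies `xᵀQx + 2dᵀx ≥ ν_R`. -/
theorem valid_cut_of_SOS {n m : ℕ} (Q : Matrix (Fin n) (Fin n) ℝ) (hQ : Q.IsSymm)
    (d : Fin n → ℝ) (A : Matrix (Fin m) (Fin n) ℝ) (b : Fin m → ℝ)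
    (xbar : Fin n → ℝ) (νR : ℝ) (c : Fin n → ℝ)
    (S : Matrix (Fin n ⊕ Unit) (Fin n ⊕ Unit) ℝ)
    (T : Matrix ((Fin m ⊕ Unit) ⊕ Unit) ((Fin m ⊕ Unit) ⊕ Unit) ℝ)
    (hS : S.PosSemidef) (hT : ∀ i j, 0 ≤ T i j)
    (hdecomp : objMat Q d νR = S + (cutMat A b c xbar)ᵀ * T * cutMat A b c xbar) :
    ∀ x : Fin n → ℝ, A *ᵥ x ≤ b → c ⬝ᵥ (x - xbar) ≤ 1 →
      νR ≤ x ⬝ᵥ (Q *ᵥ x) + 2 * (d ⬝ᵥ x) := by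
  intro x hAx hc
  set z : (Fin n ⊕ Unit) → ℝ := Sum.elim x (fun _ => 1) with hz
  have key : z ⬝ᵥ (objMat Q d νR *ᵥ z) = x ⬝ᵥ (Q *ᵥ x) + 2 * (d ⬝ᵥ x) - νR := by
    simp only [objMat, dotProduct, mulVec, Fintype.sum_sum_type, Finset.univ_unique,
      Finset.sum_singleton, Sum.elim_inl, Sum.elim_inr, of_apply, hz]
    simp only [mul_one, mul_add, Finset.sum_add_distrib, one_mul]
    ring_nf
    rw [Finset.sum_congr rfl (fun i _ => mul_comm (d i) (x i))]
    ring
  have hBz : ∀ i, 0 ≤ (cutMat A b c xbar *ᵥ z) i := by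
    intro i
    rcases i with (i | _) | _
    · have : (cutMat A b c xbar *ᵥ z) (Sum.inl (Sum.inl i)) = b i - (A *ᵥ x) i := by
        simp only [cutMat, mulVec, dotProduct, Fintype.sum_sum_type, hz, of_apply,
          Sum.elim_inl, Sum.elim_inr, Finset.univ_unique, Finset.sum_singleton,
          neg_mul, Finset.sum_neg_distrib, mul_one]
        ring
      rw [this]; linarith [hAx i]
    · simp [cutMat, mulVec, dotProduct, Fintype.sum_sum_type, hz]
    · have : (cutMat A b c xbar *ᵥ z) (Sum.inr ()) = 1 - c ⬝ᵥ (x - xbar) := by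
        simp only [cutMat, mulVec, dotProduct, Fintype.sum_sum_type, hz, of_apply,
          Sum.elim_inl, Sum.elim_inr, Finset.univ_unique, Finset.sum_singleton,
          Pi.sub_apply, mul_sub, Finset.sum_sub_distrib, neg_mul, mul_one, Finset.sum_neg_distrib]
        ring
      rw [this]; linarith
  have hquad : 0 ≤ z ⬝ᵥ (((cutMat A b c xbar)ᵀ * T * cutMat A b c xbar) *ᵥ z) := by
    have : ((cutMat A b c xbar)ᵀ * T * cutMat A b c xbar) *ᵥ z
        = (cutMat A b c xbar)ᵀ *ᵥ (T *ᵥ (cutMat A b c xbar *ᵥ z)) := by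
      rw [← mulVec_mulVec, ← mulVec_mulVec]
    rw [this, dotProduct_mulVec, vecMul_transpose]
    apply Finset.sum_nonneg
    intro i _
    apply mul_nonneg (hBz i)
    simp only [mulVec, dotProduct]
    apply Finset.sum_nonneg
    intro j _
    exact mul_nonneg (hT i j) (hBz j)
  have hSz : 0 ≤ z ⬝ᵥ (S *ᵥ z) := by
    have := hS.dotProduct_mulVec_nonneg z
    simpa using this
  have := hdecomp ▸ key
  rw [add_mulVec, dotProduct_add] at this
  linarith
end

section
/- Let Q be a symmetric n×n real matrix, d ∈ ℝⁿ, A ∈ ℝ^{m×n}, b ∈ ℝᵐ, and let x̄ be a KKT point of the QP. Let ν_R ∈ ℝ and c ∈ ℝⁿ. Suppose there exist a positive semidefinite S ∈ 𝒮^{n+1}, an entrywise nonnegative T₁ ∈ ℝ^{(m+1)×(m+1)} and β ≥ 0 such that [Q, d; dᵀ, −ν_R] = S + B₁ᵀ T₁ B₁ + ½ u vᵀ + ½ v uᵀ, where B₁ = [−A, b; 0ᵀ, 1] ∈ ℝ^{(m+1)×(n+1)}, u = (Qx̄ + d; −x̄ᵀQx̄ − dᵀx̄ + β) ∈ ℝ^{n+1}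 and v = (−c; 1 + cᵀx̄) ∈ ℝ^{n+1}. Then for every x ∈ ℝⁿ with Ax ≤ b and cᵀ(x − x̄) ≤ 1 one has xᵀQx + 2dᵀx ≥ ν_R. -/
open Matrix

/-- The `(m+1) × (n+1)` block matrix `B₁ = [−A, b; 0ᵀ, 1]`. -/
noncomputable def feasMat {n m : ℕ} (A : Matrix (Fin m) (Fin n) ℝ) (b : Fin m → ℝ) :
    Matrix (Fin m ⊕ Unit) (Fin n ⊕ Unit) ℝ :=
  Matrix.of fun i j =>
    match i, j with
    | Sum.inl i, Sum.inl j => -A i j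
    | Sum.inl i, Sum.inr _ => b i
    | Sum.inr _, Sum.inl _ => 0
    | Sum.inr _, Sum.inr _ => 1

/-- The vector `u = (Qx̄ + d; −x̄ᵀQx̄ − dᵀx̄ + β) ∈ ℝ^{n+1}`. -/
noncomputable def uVec {n : ℕ} (Q : Matrix (Fin n) (Fin n) ℝ) (d xbar : Fin n → ℝ)
    (β : ℝ) : Fin n ⊕ Unit → ℝ :=
  Sum.elim (Q *ᵥ xbar + d) (fun _ => -(xbar ⬝ᵥ (Q *ᵥ xbar)) - d ⬝ᵥ xbar + β)

/-- The vector `v = (−c; 1 + cᵀx̄) ∈ ℝ^{n+1}`. -/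
noncomputable def vVec {n : ℕ} (c xbar : Fin n → ℝ) : Fin n ⊕ Unit → ℝ :=
  Sum.elim (-c) (fun _ => 1 + c ⬝ᵥ xbar)

theorem dot_vecMulVec_mulVec {k : Type*} [Fintype k] (v w z : k → ℝ) :
    z ⬝ᵥ (vecMulVec v w *ᵥ z) = (z ⬝ᵥ v) * (w ⬝ᵥ z) := by
  have h : vecMulVec v w *ᵥ z = (w ⬝ᵥ z) • v := by
    funext i
    simp only [vecMulVec, of_apply, mulVec, dotProduct, Pi.smul_apply, smul_eq_mul,
      Finset.sum_mul, Finset.mul_sum]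
    apply Finset.sum_congr rfl; intros; ring
  rw [h, dotProduct_smul, smul_eq_mul]
  ring

/-- Lemma `l:csdp`. Let `x̄` be a KKT point of the QP. If
`[Q, d; dᵀ, −ν_R] = S + B₁ᵀ T₁ B₁ + ½uvᵀ + ½vuᵀ` with `S ⪰ 0`, `T₁ ≥ 0` entrywise
and `β ≥ 0`, then `c` is a valid cut. -/
theorem valid_cut_of_reduced_SOS {n m : ℕ} (Q : Matrix (Fin n) (Fin n) ℝ)
    (hQ : Q.IsSymm) (d : Fin n → ℝ) (A : Matrix (Fin m) (Fin n) ℝ) (b : Fin m → ℝ)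
    (xbar : Fin n → ℝ) (hfeas : A *ᵥ xbar ≤ b)
    (lam : Fin m → ℝ) (hlam : 0 ≤ lam)
    (hstat : Q *ᵥ xbar + d = -(Aᵀ *ᵥ lam))
    (hcs : (A *ᵥ xbar - b) ⬝ᵥ lam = 0)
    (νR : ℝ) (c : Fin n → ℝ) (β : ℝ) (hβ : 0 ≤ β)
    (S : Matrix (Fin n ⊕ Unit) (Fin n ⊕ Unit) ℝ)
    (T₁ : Matrix (Fin m ⊕ Unit) (Fin m ⊕ Unit) ℝ)
    (hS : S.PosSemidef) (hT₁ : ∀ i j, 0 ≤ T₁ i j)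
    (hdecomp : objMat Q d νR =
      S + (feasMat A b)ᵀ * T₁ * feasMat A b +
        (1 / 2 : ℝ) • (vecMulVec (uVec Q d xbar β) (vVec c xbar)) +
        (1 / 2 : ℝ) • (vecMulVec (vVec c xbar) (uVec Q d xbar β))) :
    ∀ x : Fin n → ℝ, A *ᵥ x ≤ b → c ⬝ᵥ (x - xbar) ≤ 1 →
      νR ≤ x ⬝ᵥ (Q *ᵥ x) + 2 * (d ⬝ᵥ x) := by
  intro x hx hcx
  classical
  set z : Fin n ⊕ Unit → ℝ := Sum.elim x (fun _ => 1) with hzdef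
  -- LHS quadratic form
  have h1 : z ⬝ᵥ (objMat Q d νR *ᵥ z) = x ⬝ᵥ (Q *ᵥ x) + 2 * (d ⬝ᵥ x) - νR := by
    simp only [objMat, mulVec, dotProduct, of_apply, Fintype.sum_sum_type,
      Finset.univ_unique, Finset.sum_singleton, hzdef, Sum.elim_inl, Sum.elim_inr,
      Finset.mul_sum, Finset.sum_mul, mul_one]
    simp only [mul_add, one_mul, Finset.mul_sum]
    rw [Finset.sum_add_distrib]
    ring_nf
    have e : ∀ i : Fin n, d i * x i * 2 = x i * d i + d i * x i := by intros; ring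
    simp only [e, Finset.sum_add_distrib]
    ring
  -- S term nonneg
  have hSz : 0 ≤ z ⬝ᵥ (S *ᵥ z) := by
    have := hS.dotProduct_mulVec_nonneg z
    simpa using this
  -- feasibility vector nonneg
  have hBz : ∀ i, 0 ≤ (feasMat A b *ᵥ z) i := by
    intro i
    cases i with
    | inl i =>
      have hxi := hx i
      simp only [mulVec, dotProduct] at hxi
      simp only [feasMat, mulVec, dotProduct, of_apply, Fintype.sum_sum_type,
        Finset.univ_unique, Finset.sum_singleton, hzdef, Sum.elim_inl, Sum.elim_inr,
        mul_one, neg_mul]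
      have : ∑ j : Fin n, -(A i j * x j) = -∑ j : Fin n, A i j * x j := by
        rw [Finset.sum_neg_distrib]
      rw [this]
      linarith
    | inr i =>
      simp [feasMat, mulVec, dotProduct, hzdef, Fintype.sum_sum_type]
  -- T₁ term nonneg
  have hTz : 0 ≤ z ⬝ᵥ (((feasMat A b)ᵀ * T₁ * feasMat A b) *ᵥ z) := by
    have hrw : ((feasMat A b)ᵀ * T₁ * feasMat A b) *ᵥ z
        = (feasMat A b)ᵀ *ᵥ (T₁ *ᵥ (feasMat A b *ᵥ z)) := by
      rw [← mulVec_mulVec, ← mulVec_mulVec]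
    rw [hrw, dotProduct_mulVec, vecMul_transpose]
    set w := feasMat A b *ᵥ z with hw
    simp only [dotProduct, mulVec]
    apply Finset.sum_nonneg
    intro i _
    apply mul_nonneg (hBz i)
    apply Finset.sum_nonneg
    intro j _
    exact mul_nonneg (hT₁ i j) (hBz j)
  -- u term nonneg
  have hu : 0 ≤ z ⬝ᵥ uVec Q d xbar β := by
    have hz1 : z ⬝ᵥ uVec Q d xbar β
        = x ⬝ᵥ (Q *ᵥ xbar + d) + (-(xbar ⬝ᵥ (Q *ᵥ xbar)) - d ⬝ᵥ xbar + β) := by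
      simp [uVec, dotProduct, hzdef, Fintype.sum_sum_type]
    have e1 : x ⬝ᵥ (Q *ᵥ xbar + d) = -((A *ᵥ x) ⬝ᵥ lam) := by
      rw [hstat, dotProduct_neg, dotProduct_mulVec, vecMul_transpose]
    have e2 : xbar ⬝ᵥ (Q *ᵥ xbar) + d ⬝ᵥ xbar = -((A *ᵥ xbar) ⬝ᵥ lam) := by
      have : xbar ⬝ᵥ (Q *ᵥ xbar + d) = -((A *ᵥ xbar) ⬝ᵥ lam) := by
        rw [hstat, dotProduct_neg, dotProduct_mulVec, vecMul_transpose]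
      rw [dotProduct_add, dotProduct_comm xbar d] at this
      linarith [this]
    have e3 : (A *ᵥ xbar) ⬝ᵥ lam = b ⬝ᵥ lam := by
      rw [sub_dotProduct] at hcs; linarith
    have e4 : 0 ≤ (b - A *ᵥ x) ⬝ᵥ lam := by
      apply Finset.sum_nonneg
      intro i _
      exact mul_nonneg (by simpa [sub_nonneg] using hx i) (hlam i)
    rw [sub_dotProduct] at e4
    rw [hz1, e1]
    linarith
  -- v term nonneg
  have hv : 0 ≤ z ⬝ᵥ vVec c xbar := by
    have hz2 : z ⬝ᵥ vVec c xbar = x ⬝ᵥ (-c) + (1 + c ⬝ᵥ xbar) := by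
      simp [vVec, dotProduct, hzdef, Fintype.sum_sum_type]
    rw [dotProduct_sub] at hcx
    rw [hz2, dotProduct_neg, dotProduct_comm x c]
    linarith
  -- combine
  have key := congrArg (fun M => z ⬝ᵥ (M *ᵥ z)) hdecomp
  simp only [add_mulVec, dotProduct_add, smul_mulVec, dotProduct_smul,
    smul_eq_mul, dot_vecMulVec_mulVec] at key
  rw [h1] at key
  rw [dotProduct_comm (vVec c xbar) z, dotProduct_comm (uVec Q d xbar β) z] at key
  nlinarith [mul_nonneg hu hv]
end

section
/- Let Q be a symmetric n×n real matrix, d ∈ ℝⁿ, A ∈ ℝ^{m×n}, b ∈ ℝᵐ, β > 0. If x̄ is a KKT point of the QP and z̄ ∈ F, then there exists a symmetric positive semidefinite matrix U ∈ 𝒮^{n+1} such that (i) the matrix [−A, b; 0ᵀ, 1] U [−A, b; 0ᵀ, 1]ᵀ is entrywise nonnegative, and (ii) z̄ − x̄ = [I, −x̄] U (Qx̄ + d; −x̄ᵀQx̄ − dᵀx̄ + β), where [I, −x̄] ∈ ℝ^{n×(n+1)} and (Qx̄ + d; −x̄ᵀQx̄ − dᵀx̄ + β) ∈ ℝ^{n+1}.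 (In other words, the dual SDP used to search for a cut is feasible.) -/
open Matrix

/-- The `n × (n+1)` block matrix `[I, −x̄]`. -/
noncomputable def projMat {n : ℕ} (xbar : Fin n → ℝ) :
    Matrix (Fin n) (Fin n ⊕ Unit) ℝ :=
  Matrix.of fun i j =>
    match j with
    | Sum.inl j => if i = j then 1 else 0
    | Sum.inr _ => -xbar i

lemma vecMulVec_mulVec' {κ : Type*} [Fintype κ] (v w x : κ → ℝ) :
    Matrix.vecMulVec v w *ᵥ x = (w ⬝ᵥ x) • v := by
  ext i
  simp [Matrix.mulVec, Matrix.vecMulVec_apply, dotProduct, Finset.sum_mul,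
    Finset.mul_sum, mul_comm, mul_assoc, mul_left_comm]

lemma mul_vecMulVec_mul {ι ι' κ : Type*} [Fintype κ] [Fintype ι] [Fintype ι']
    (M : Matrix ι κ ℝ) (N : Matrix ι' κ ℝ) (v w : κ → ℝ) :
    M * Matrix.vecMulVec v w * Nᵀ = Matrix.vecMulVec (M *ᵥ v) (N *ᵥ w) := by
  ext i j
  simp only [Matrix.mul_apply, Matrix.vecMulVec_apply, Matrix.mulVec, dotProduct,
    Matrix.transpose_apply, Finset.sum_mul, Finset.mul_sum]
  apply Finset.sum_congr rfl; intro k _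
  apply Finset.sum_congr rfl; intro l _
  ring

lemma smul_vecMulVec_posSemidef {κ : Type*} [Fintype κ] [DecidableEq κ]
    (v : κ → ℝ) {t : ℝ} (ht : 0 ≤ t) :
    (t • Matrix.vecMulVec v v).PosSemidef := by
  rw [Matrix.posSemidef_iff_dotProduct_mulVec]
  constructor
  · ext i j
    simp [Matrix.conjTranspose_apply, Matrix.vecMulVec_apply, mul_comm]
  · intro x
    have h1 : (t • Matrix.vecMulVec v v) *ᵥ x = (t * (v ⬝ᵥ x)) • v := by
      rw [Matrix.smul_mulVec, vecMulVec_mulVec', smul_smul]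
    rw [h1]
    have : star x ⬝ᵥ (t * (v ⬝ᵥ x)) • v = t * (v ⬝ᵥ x) ^ 2 := by
      simp only [dotProduct_smul, smul_eq_mul, star_trivial]
      have : x ⬝ᵥ v = v ⬝ᵥ x := dotProduct_comm _ _
      rw [this]; ring
    rw [this]
    positivity

/-- If `β > 0`, `x̄` is a KKT point of the QP and `z̄ ∈ F`, then the
dual SDP used to search for a cut is feasible: there is `U ⪰ 0` with
`[−A, b; 0ᵀ, 1] U [−A, b; 0ᵀ, 1]ᵀ ≥ 0` entrywise and
`z̄ − x̄ = [I, −x̄] U (Qx̄ + d; −x̄ᵀQx̄ − dᵀx̄ + β)`. -/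
theorem dual_SDP_feasible {n m : ℕ} (Q : Matrix (Fin n) (Fin n) ℝ) (hQ : Q.IsSymm)
    (d : Fin n → ℝ) (A : Matrix (Fin m) (Fin n) ℝ) (b : Fin m → ℝ)
    (β : ℝ) (hβ : 0 < β)
    (xbar : Fin n → ℝ) (hfeas : A *ᵥ xbar ≤ b)
    (lam : Fin m → ℝ) (hlam : 0 ≤ lam)
    (hstat : Q *ᵥ xbar + d = -(Aᵀ *ᵥ lam))
    (hcs : (A *ᵥ xbar - b) ⬝ᵥ lam = 0)
    (zbar : Fin n → ℝ) (hzbar : A *ᵥ zbar ≤ b) :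
    ∃ U : Matrix (Fin n ⊕ Unit) (Fin n ⊕ Unit) ℝ, U.PosSemidef ∧
      (∀ i j, 0 ≤ (feasMat A b * U * (feasMat A b)ᵀ) i j) ∧
      zbar - xbar = projMat xbar *ᵥ (U *ᵥ uVec Q d xbar β) := by
  classical
  set v : Fin n ⊕ Unit → ℝ := Sum.elim zbar (fun _ => 1) with hv
  set s : ℝ := (zbar - xbar) ⬝ᵥ (Q *ᵥ xbar + d) with hs
  -- s ≥ 0
  have hs0 : 0 ≤ s := by
    have h1 : s = -((A *ᵥ (zbar - xbar)) ⬝ᵥ lam) := by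
      rw [hs, hstat, dotProduct_neg, Matrix.dotProduct_mulVec,
        Matrix.vecMul_transpose]
    have h2 : A *ᵥ (zbar - xbar) = (A *ᵥ zbar - b) - (A *ᵥ xbar - b) := by
      rw [Matrix.mulVec_sub]; ring_nf
    have h3 : (A *ᵥ (zbar - xbar)) ⬝ᵥ lam = (A *ᵥ zbar - b) ⬝ᵥ lam := by
      rw [h2, sub_dotProduct, hcs, sub_zero]
    have h4 : (A *ᵥ zbar - b) ⬝ᵥ lam ≤ 0 := by
      apply Finset.sum_nonpos
      intro i _
      exact mul_nonpos_of_nonpos_of_nonneg (sub_nonpos.2 (hzbar i)) (hlam i)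
    rw [h1, h3]; linarith
  have htpos : (0:ℝ) < s + β := by linarith
  set t : ℝ := (s + β)⁻¹ with htdef
  have ht0 : 0 ≤ t := le_of_lt (inv_pos.2 htpos)
  refine ⟨t • Matrix.vecMulVec v v, smul_vecMulVec_posSemidef v ht0, ?_, ?_⟩
  · -- entrywise nonnegativity
    intro i j
    have hB : feasMat A b *ᵥ v = Sum.elim (b - A *ᵥ zbar) (fun _ => 1) := by
      ext i
      cases i with
      | inl i =>
        simp [feasMat, hv, Matrix.mulVec, dotProduct, Fintype.sum_sum_type,
          Finset.sum_neg_distrib, neg_mul, sub_eq_add_neg, add_comm,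
          Matrix.mulVec]
      | inr _ =>
        simp [feasMat, hv, Matrix.mulVec, dotProduct, Fintype.sum_sum_type]
    have hBnn : ∀ i, 0 ≤ (feasMat A b *ᵥ v) i := by
      intro i
      rw [hB]
      cases i with
      | inl i => simpa using sub_nonneg.2 (hzbar i)
      | inr _ => norm_num
    have : feasMat A b * (t • Matrix.vecMulVec v v) * (feasMat A b)ᵀ
        = t • Matrix.vecMulVec (feasMat A b *ᵥ v) (feasMat A b *ᵥ v) := by
      rw [Matrix.mul_smul, Matrix.smul_mul, mul_vecMulVec_mul]
    rw [this]
    simp only [Matrix.smul_apply, Matrix.vecMulVec_apply, smul_eq_mul]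
    exact mul_nonneg ht0 (mul_nonneg (hBnn i) (hBnn j))
  · -- the linear equation
    have hvu : v ⬝ᵥ uVec Q d xbar β = s + β := by
      simp only [hv, uVec, dotProduct, Fintype.sum_sum_type, Sum.elim_inl,
        Sum.elim_inr, Finset.sum_const, Finset.card_univ, Fintype.card_unit,
        one_smul, one_mul]
      have : s = zbar ⬝ᵥ (Q *ᵥ xbar + d) - xbar ⬝ᵥ (Q *ᵥ xbar + d) := by
        rw [hs, sub_dotProduct]
      rw [this]
      simp only [dotProduct_add, dotProduct, Pi.add_apply, mul_add,
        Finset.sum_add_distrib]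
      have hdx : ∑ i, d i * xbar i = ∑ i, xbar i * d i := by
        apply Finset.sum_congr rfl; intros; ring
      rw [hdx]
      ring
    have hU : (t • Matrix.vecMulVec v v) *ᵥ uVec Q d xbar β = v := by
      rw [Matrix.smul_mulVec, vecMulVec_mulVec', hvu, smul_smul, htdef,
        inv_mul_cancel₀ (ne_of_gt htpos), one_smul]
    rw [hU]
    ext i
    simp [projMat, hv, Matrix.mulVec, dotProduct, Fintype.sum_sum_type,
      Finset.sum_ite_eq, sub_eq_add_neg]
end

section
/- Let Q be a symmetric n×n real matrix, d ∈ ℝⁿ, A ∈ ℝ^{m×n}, b ∈ ℝᵐ, β ≥ 0, and let x̄ be a KKT point of the QP. If F has nonempty interior, then there exist z̄ ∈ ℝⁿ and a symmetric positive definite matrix U ∈ 𝒮^{n+1} such that (i) [−A, b; 0ᵀ, 1] U [−A, b; 0ᵀ, 1]ᵀ is entrywise nonnegative, (ii) z̄ − x̄ = [I, −x̄] U (Qx̄ + d; −x̄ᵀQx̄ − dᵀx̄ + β), and (iii) z̄ − x̄ is a nonnegative linear combination of finitely many vectors of the form x − x̄ with x ∈ F (hence z̄ − x̄ lies in the tangent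 cone of F at x̄). In particular the dual SDP used to search for a cut is strictly feasible for this z̄. -/
open Matrix

section Aux

lemma aux_vecMulVec_mulVec {J : Type*} [Fintype J] (w v u : J → ℝ) :
    vecMulVec w v *ᵥ u = (v ⬝ᵥ u) • w := by
  funext i
  simp only [mulVec, dotProduct, vecMulVec_apply, Pi.smul_apply, smul_eq_mul,
    Finset.sum_mul]
  exact Finset.sum_congr rfl fun j _ => by ring

lemma aux_mul_vecMulVec_mul_transpose {I J : Type*} [Fintype I] [Fintype J]
    (B : Matrix I J ℝ) (w v : J → ℝ) :
    B * vecMulVec w v * Bᵀ = vecMulVec (B *ᵥ w) (B *ᵥ v) := by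
  ext i j
  rw [mul_apply]
  have h1 : ∀ q, (B * vecMulVec w v) i q = (B *ᵥ w) i * v q := by
    intro q
    rw [mul_apply]
    simp only [vecMulVec_apply, mulVec, dotProduct, Finset.sum_mul]
    exact Finset.sum_congr rfl fun p _ => by ring
  simp only [h1, transpose_apply, vecMulVec_apply, mulVec, dotProduct, Finset.mul_sum]
  exact Finset.sum_congr rfl fun q _ => by ring

lemma aux_sum_mulVec {ι J : Type*} [Fintype J] (s : Finset ι)
    (M : ι → Matrix J J ℝ) (v : J → ℝ) :
    (∑ k ∈ s, M k) *ᵥ v = ∑ k ∈ s, M k *ᵥ v := by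
  funext i
  simp only [mulVec, dotProduct, Matrix.sum_apply, Finset.sum_apply, Finset.sum_mul]
  exact Finset.sum_comm

lemma aux_feasMat_mulVec {n m : ℕ} (A : Matrix (Fin m) (Fin n) ℝ) (b : Fin m → ℝ)
    (x : Fin n → ℝ) :
    feasMat A b *ᵥ Sum.elim x 1 = Sum.elim (b - A *ᵥ x) 1 := by
  funext i
  cases i with
  | inl i =>
    simp only [feasMat, mulVec, dotProduct, Fintype.sum_sum_type, of_apply,
      Sum.elim_inl, Sum.elim_inr, Pi.one_apply, Pi.sub_apply]
    simp [neg_mul, Finset.sum_neg_distrib, sub_eq_add_neg, add_comm]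
  | inr i =>
    simp [feasMat, mulVec, dotProduct, Fintype.sum_sum_type]

lemma aux_projMat_mulVec {n : ℕ} (xbar x : Fin n → ℝ) :
    projMat xbar *ᵥ Sum.elim x 1 = x - xbar := by
  funext i
  simp only [projMat, mulVec, dotProduct, Fintype.sum_sum_type, of_apply,
    Sum.elim_inl, Sum.elim_inr, Pi.one_apply, Pi.sub_apply, ite_mul, one_mul, zero_mul]
  simp [Finset.sum_ite_eq, sub_eq_add_neg]

lemma aux_dot_sum_elim {n : ℕ} (x : Fin n → ℝ) (v : Fin n ⊕ Unit → ℝ) :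
    Sum.elim x 1 ⬝ᵥ v = x ⬝ᵥ (fun j => v (Sum.inl j)) + v (Sum.inr ()) := by
  simp [dotProduct, Fintype.sum_sum_type]


lemma aux_dotProduct_sum {ι J : Type*} [Fintype J] (s : Finset ι) (v : J → ℝ)
    (w : ι → J → ℝ) : v ⬝ᵥ (∑ k ∈ s, w k) = ∑ k ∈ s, v ⬝ᵥ w k := by
  simp only [dotProduct, Finset.sum_apply, Finset.mul_sum]
  exact Finset.sum_comm

lemma aux_mulVec_vecsum {I J ι : Type*} [Fintype J] (M : Matrix I J ℝ)
    (s : Finset ι) (w : ι → J → ℝ) :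
    M *ᵥ (∑ k ∈ s, w k) = ∑ k ∈ s, M *ᵥ w k := by
  funext i
  simp only [mulVec, dotProduct, Finset.sum_apply, Finset.mul_sum]
  exact Finset.sum_comm

end Aux

/-- Let `x̄` be a KKT point of the QP and `β ≥ 0`. If the feasible
region `F = {x : Ax ≤ b}` has nonempty interior, then there are `z̄` and a positive
definite `U` such that `B₁ U B₁ᵀ ≥ 0` entrywise,
`z̄ − x̄ = [I, −x̄] U (Qx̄ + d; −x̄ᵀQx̄ − dᵀx̄ + β)`, and `z̄ − x̄` is a nonnegative
linear combination of finitely many vectors `x − x̄` with `x ∈ F`. -/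
theorem dual_SDP_strictly_feasible {n m : ℕ} (Q : Matrix (Fin n) (Fin n) ℝ)
    (hQ : Q.IsSymm) (d : Fin n → ℝ) (A : Matrix (Fin m) (Fin n) ℝ) (b : Fin m → ℝ)
    (β : ℝ) (hβ : 0 ≤ β)
    (xbar : Fin n → ℝ) (hfeas : A *ᵥ xbar ≤ b)
    (lam : Fin m → ℝ) (hlam : 0 ≤ lam)
    (hstat : Q *ᵥ xbar + d = -(Aᵀ *ᵥ lam))
    (hcs : (A *ᵥ xbar - b) ⬝ᵥ lam = 0)
    (hint : (interior {x : Fin n → ℝ | A *ᵥ x ≤ b}).Nonempty) :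
    ∃ zbar : Fin n → ℝ, ∃ U : Matrix (Fin n ⊕ Unit) (Fin n ⊕ Unit) ℝ,
      U.PosDef ∧
      (∀ i j, 0 ≤ (feasMat A b * U * (feasMat A b)ᵀ) i j) ∧
      zbar - xbar = projMat xbar *ᵥ (U *ᵥ uVec Q d xbar β) ∧
      ∃ (N : ℕ) (xs : Fin N → Fin n → ℝ) (α : Fin N → ℝ),
        (∀ i, A *ᵥ xs i ≤ b) ∧ (∀ i, 0 ≤ α i) ∧
        zbar - xbar = ∑ i, α i • (xs i - xbar) := by
  classical
  obtain ⟨x₀, hx₀⟩ := hint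
  rw [mem_interior_iff_mem_nhds, Metric.mem_nhds_iff] at hx₀
  obtain ⟨r, hr, hball⟩ := hx₀
  -- the feasible points
  set xs : Fin (n + 1) → Fin n → ℝ :=
    Fin.cons x₀ (fun k => x₀ + (r / 2) • (Pi.single k 1 : Fin n → ℝ)) with hxs_def
  have hxsfeas : ∀ k, A *ᵥ xs k ≤ b := by
    intro k
    refine hball ?_
    refine Fin.cases ?_ ?_ k
    · exact Metric.mem_ball_self hr
    · intro k
      have hdist : dist (xs k.succ) x₀ = r / 2 := by
        rw [dist_eq_norm]
        simp only [hxs_def, Fin.cons_succ, add_sub_cancel_left]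
        rw [norm_smul, Pi.norm_single]
        rw [Real.norm_eq_abs, abs_div, abs_of_pos hr]
        norm_num
      rw [Metric.mem_ball, hdist]
      linarith
  -- lifted vectors
  set y : Fin (n + 1) → (Fin n ⊕ Unit) → ℝ := fun k => Sum.elim (xs k) 1 with hy_def
  set U : Matrix (Fin n ⊕ Unit) (Fin n ⊕ Unit) ℝ :=
    ∑ k, vecMulVec (y k) (y k) with hU_def
  set α : Fin (n + 1) → ℝ := fun k => y k ⬝ᵥ uVec Q d xbar β with hα_def
  -- nonnegativity of coefficients
  have hαnn : ∀ k, 0 ≤ α k := by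
    intro k
    have h1 : α k = (xs k - xbar) ⬝ᵥ (Q *ᵥ xbar + d) + β := by
      simp only [hα_def, hy_def, aux_dot_sum_elim]
      simp only [uVec, Sum.elim_inl, Sum.elim_inr, sub_dotProduct]
      have : xbar ⬝ᵥ (Q *ᵥ xbar + d) = xbar ⬝ᵥ (Q *ᵥ xbar) + d ⬝ᵥ xbar := by
        rw [dotProduct_add, dotProduct_comm xbar d]
      rw [this]; ring
    have h2 : (xs k - xbar) ⬝ᵥ (Q *ᵥ xbar + d) = lam ⬝ᵥ (b - A *ᵥ xs k) := by
      have h3 : lam ⬝ᵥ (A *ᵥ xbar) = lam ⬝ᵥ b := by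
        have h := hcs
        rw [sub_dotProduct, dotProduct_comm (A *ᵥ xbar) lam, dotProduct_comm b lam] at h
        linarith
      rw [hstat, dotProduct_neg, dotProduct_mulVec, vecMul_transpose,
        dotProduct_comm _ lam, mulVec_sub, dotProduct_sub, dotProduct_sub, h3]
      ring
    rw [h1, h2]
    have h4 : 0 ≤ lam ⬝ᵥ (b - A *ᵥ xs k) := by
      apply Finset.sum_nonneg
      intro i _
      exact mul_nonneg (hlam i) (by simpa using sub_nonneg.2 (hxsfeas k i))
    linarith
  refine ⟨xbar + ∑ k, α k • (xs k - xbar), U, ?_, ?_, ?_, n + 1, xs, α, hxsfeas, hαnn, ?_⟩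
  · -- positive definiteness
    rw [Matrix.posDef_iff_dotProduct_mulVec]
    constructor
    · rw [Matrix.IsHermitian]
      ext i j
      simp only [conjTranspose_apply, hU_def, Matrix.sum_apply, vecMulVec_apply,
        star_trivial, map_sum, star_mul', mul_comm]
    · intro v hv
      have hq : star v ⬝ᵥ (U *ᵥ v) = ∑ k, (y k ⬝ᵥ v) ^ 2 := by
        rw [hU_def, aux_sum_mulVec, aux_dotProduct_sum]
        refine Finset.sum_congr rfl fun k _ => ?_
        rw [aux_vecMulVec_mulVec, dotProduct_smul]
        simp only [star_trivial, smul_eq_mul]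
        rw [dotProduct_comm v (y k)]
        ring
      rw [hq]
      have hnz : ∃ k, y k ⬝ᵥ v ≠ 0 := by
        by_contra h
        push_neg at h
        apply hv
        have hzero0 : y 0 ⬝ᵥ v = 0 := h 0
        have hinl : ∀ j, v (Sum.inl j) = 0 := by
          intro j
          have hs : y j.succ ⬝ᵥ v - y 0 ⬝ᵥ v = (r / 2) * v (Sum.inl j) := by
            simp only [hy_def, aux_dot_sum_elim, hxs_def, Fin.cons_succ, Fin.cons_zero]
            rw [add_dotProduct]
            have hsingle : ((r / 2) • (Pi.single j 1 : Fin n → ℝ)) ⬝ᵥ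
                (fun p => v (Sum.inl p)) = (r / 2) * v (Sum.inl j) := by
              simp [dotProduct, Pi.single_apply, ite_mul, mul_assoc]
            rw [hsingle]; ring
          rw [h j.succ, hzero0] at hs
          have hr2 : (r / 2 : ℝ) ≠ 0 := by positivity
          rw [sub_self] at hs
          exact ((mul_eq_zero.1 hs.symm).resolve_left hr2)
        have hinr : v (Sum.inr ()) = 0 := by
          have := hzero0
          rw [hy_def] at this
          rw [aux_dot_sum_elim] at this
          have hdz : xs 0 ⬝ᵥ (fun p => v (Sum.inl p)) = 0 := by
            simp [dotProduct, hinl]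
          rw [hdz] at this
          linarith
        funext i
        cases i with
        | inl j => exact hinl j
        | inr u => cases u; exact hinr
      obtain ⟨k₀, hk₀⟩ := hnz
      have : (0:ℝ) < (y k₀ ⬝ᵥ v) ^ 2 := by positivity
      calc (0:ℝ) < (y k₀ ⬝ᵥ v) ^ 2 := this
        _ ≤ ∑ k, (y k ⬝ᵥ v) ^ 2 :=
          Finset.single_le_sum (f := fun k => (y k ⬝ᵥ v) ^ 2)
            (fun k _ => sq_nonneg _) (Finset.mem_univ k₀)
  · -- entrywise nonnegativity
    intro i j
    have hBU : feasMat A b * U * (feasMat A b)ᵀ =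
        ∑ k, vecMulVec (feasMat A b *ᵥ y k) (feasMat A b *ᵥ y k) := by
      rw [hU_def, Matrix.mul_sum, Matrix.sum_mul]
      exact Finset.sum_congr rfl fun k _ => aux_mul_vecMulVec_mul_transpose _ _ _
    rw [hBU, Matrix.sum_apply]
    refine Finset.sum_nonneg fun k _ => ?_
    rw [vecMulVec_apply]
    have hnn : ∀ p, 0 ≤ (feasMat A b *ᵥ y k) p := by
      intro p
      rw [hy_def, aux_feasMat_mulVec]
      cases p with
      | inl p => simpa using sub_nonneg.2 (hxsfeas k p)
      | inr p => simp
    exact mul_nonneg (hnn i) (hnn j)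
  · -- the equation
    rw [add_sub_cancel_left, hU_def, aux_sum_mulVec, aux_mulVec_vecsum]
    refine Finset.sum_congr rfl fun k _ => ?_
    rw [aux_vecMulVec_mulVec, Matrix.mulVec_smul, hy_def, aux_projMat_mulVec]
  · rw [add_sub_cancel_left]
end

section
/- Let Q be a symmetric n×n real matrix, d ∈ ℝⁿ, A ∈ ℝ^{m×n}, b ∈ ℝᵐ, and let M, N be symmetric positive semidefinite n×n matrices with Q = M − N. Define Ψ(x, x̃) := ½xᵀMx + ½x̃ᵀMx̃ + dᵀx + dᵀx̃ − xᵀNx̃. Then a point x̄ ∈ F is a KKT point of the QP if and only if x̄ minimizes the function x ↦ Ψ(x, x̄) over F, i.e. Ψ(x̄, x̄) ≤ Ψ(x, x̄) for all x ∈ F. -/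
open Matrix

/-- Farkas' lemma, proved by induction on the number of generators. -/
theorem farkas_aux {n : ℕ} : ∀ {m : ℕ} (a : Fin m → (Fin n → ℝ)) (g : Fin n → ℝ),
    (∀ v : Fin n → ℝ, (∀ i, a i ⬝ᵥ v ≤ 0) → g ⬝ᵥ v ≤ 0) →
    ∃ lam : Fin m → ℝ, (∀ i, 0 ≤ lam i) ∧ g = ∑ i, lam i • a i := by
  intro m
  induction m with
  | zero =>
    intro a g h
    refine ⟨0, fun i => le_rfl, ?_⟩
    have hg : g ⬝ᵥ g ≤ 0 := h g (fun i => i.elim0)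
    have : g = 0 := by
      rw [← dotProduct_self_eq_zero (v := g)]
      exact le_antisymm hg (Finset.sum_nonneg fun i _ => mul_self_nonneg _)
    simp [this]
  | succ m ih =>
    intro a g h
    by_cases hc : ∀ v : Fin n → ℝ, (∀ i : Fin m, a i.castSucc ⬝ᵥ v ≤ 0) → g ⬝ᵥ v ≤ 0
    · obtain ⟨μ, hμ, hg⟩ := ih (fun i => a i.castSucc) g hc
      refine ⟨Fin.snoc μ 0, ?_, ?_⟩
      · intro i
        refine Fin.lastCases ?_ ?_ i
        · simp
        · intro j; simpa using hμ j
      · rw [Fin.sum_univ_castSucc]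
        simpa using hg
    · push_neg at hc
      obtain ⟨w, hw, hgw⟩ := hc
      set am := a (Fin.last m) with ham
      have hamw : 0 < am ⬝ᵥ w := by
        by_contra hle
        push_neg at hle
        refine absurd (h w ?_) (not_le.mpr hgw)
        intro i
        refine Fin.lastCases ?_ ?_ i
        · exact hle
        · exact hw
      set c := am ⬝ᵥ w with hc
      set bvec : Fin m → (Fin n → ℝ) :=
        fun i => c • a i.castSucc - (a i.castSucc ⬝ᵥ w) • am with hbvec
      set hv : Fin n → ℝ := c • g - (g ⬝ᵥ w) • am with hhv
      have key : ∀ v : Fin n → ℝ, (∀ i, bvec i ⬝ᵥ v ≤ 0) → hv ⬝ᵥ v ≤ 0 := by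
        intro v hvle
        have hau : ∀ i : Fin (m + 1), a i ⬝ᵥ (c • v - (am ⬝ᵥ v) • w) ≤ 0 := by
          intro i
          refine Fin.lastCases ?_ ?_ i
          · simp [dotProduct_sub, dotProduct_smul, smul_eq_mul, mul_comm]; exact le_rfl
          · intro j
            have := hvle j
            simp only [hbvec, sub_dotProduct, smul_dotProduct, smul_eq_mul] at this
            simp only [dotProduct_sub, dotProduct_smul, smul_eq_mul]
            nlinarith [this]
        have := h _ hau
        simp only [dotProduct_sub, dotProduct_smul, smul_eq_mul] at this
        simp only [hhv, sub_dotProduct, smul_dotProduct, smul_eq_mul]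
        nlinarith [this]
      obtain ⟨μ, hμ, hh⟩ := ih bvec hv key
      set lamlast : ℝ := (g ⬝ᵥ w - ∑ i, μ i * (a i.castSucc ⬝ᵥ w)) / c with hlamlast
      have hlamlast_nonneg : 0 ≤ lamlast := by
        apply div_nonneg _ (le_of_lt hamw)
        have : ∀ i ∈ Finset.univ, μ i * (a i.castSucc ⬝ᵥ w) ≤ 0 :=
          fun i _ => mul_nonpos_of_nonneg_of_nonpos (hμ i) (hw i)
        have hsum : (∑ i, μ i * (a i.castSucc ⬝ᵥ w)) ≤ 0 := Finset.sum_nonpos this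
        linarith
      refine ⟨Fin.snoc μ lamlast, ?_, ?_⟩
      · intro i
        refine Fin.lastCases ?_ ?_ i
        · simpa using hlamlast_nonneg
        · intro j; simpa using hμ j
      · rw [Fin.sum_univ_castSucc]
        simp only [Fin.snoc_castSucc, Fin.snoc_last]
        have hcne : c ≠ 0 := ne_of_gt hamw
        have expand : (∑ i, μ i • bvec i)
            = c • (∑ i, μ i • a i.castSucc) - (∑ i, μ i * (a i.castSucc ⬝ᵥ w)) • am := by
          rw [Finset.smul_sum, Finset.sum_smul, ← Finset.sum_sub_distrib]
          refine Finset.sum_congr rfl fun i _ => ?_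
          simp only [hbvec, smul_sub, smul_smul]
          ring_nf
        rw [expand] at hh
        have key2 : c • g = c • ((∑ i, μ i • a i.castSucc) + lamlast • am) := by
          rw [smul_add, hlamlast, smul_smul, mul_div_cancel₀ _ hcne]
          rw [sub_eq_iff_eq_add] at hh
          rw [hh]
          module
        have := smul_right_injective (Fin n → ℝ) hcne key2
        simpa using this

/-- The bi-convex function `Ψ(x, x̃) = ½xᵀMx + ½x̃ᵀMx̃ + dᵀx + dᵀx̃ − xᵀNx̃`. -/
noncomputable def Psi {n : ℕ} (M N : Matrix (Fin n) (Fin n) ℝ) (d : Fin n → ℝ)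
    (x xt : Fin n → ℝ) : ℝ :=
  (1 / 2 : ℝ) * (x ⬝ᵥ (M *ᵥ x)) + (1 / 2 : ℝ) * (xt ⬝ᵥ (M *ᵥ xt)) +
    d ⬝ᵥ x + d ⬝ᵥ xt - x ⬝ᵥ (N *ᵥ xt)

theorem psi_diff' {n : ℕ} (M N : Matrix (Fin n) (Fin n) ℝ) (hM : M.IsSymm)
    (d x xbar : Fin n → ℝ) :
    Psi M N d x xbar - Psi M N d xbar xbar
      = (1/2 : ℝ) * ((x - xbar) ⬝ᵥ M *ᵥ (x - xbar))
        + (x - xbar) ⬝ᵥ ((M - N) *ᵥ xbar + d) := by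
  have hsym : x ⬝ᵥ M *ᵥ xbar = xbar ⬝ᵥ M *ᵥ x := by
    rw [dotProduct_mulVec, ← hM, vecMul_transpose, hM, dotProduct_comm]
  have hdx : (x - xbar) ⬝ᵥ d = d ⬝ᵥ x - d ⬝ᵥ xbar := by
    rw [dotProduct_comm, dotProduct_sub]
  simp only [Psi, Matrix.mulVec_sub, Matrix.sub_mulVec, dotProduct_sub,
    sub_dotProduct, dotProduct_add, hdx, hsym]
  ring

/-- Lemma `l:biKKT`. Let `Q = M − N` with `M, N ⪰ 0`. A feasible
point `x̄` is a KKT point of the QP if and only if `x̄` minimizes `x ↦ Ψ(x, x̄)` over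
the feasible region `F = {x : Ax ≤ b}`. -/
theorem kkt_iff_psi_min {n m : ℕ} (Q M N : Matrix (Fin n) (Fin n) ℝ)
    (hQ : Q.IsSymm) (hM : M.PosSemidef) (hN : N.PosSemidef) (hQMN : Q = M - N)
    (d : Fin n → ℝ) (A : Matrix (Fin m) (Fin n) ℝ) (b : Fin m → ℝ)
    (xbar : Fin n → ℝ) (hfeas : A *ᵥ xbar ≤ b) :
    (∃ lam : Fin m → ℝ, 0 ≤ lam ∧ Q *ᵥ xbar + d = -(Aᵀ *ᵥ lam) ∧
        (A *ᵥ xbar - b) ⬝ᵥ lam = 0) ↔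
      (∀ x : Fin n → ℝ, A *ᵥ x ≤ b → Psi M N d xbar xbar ≤ Psi M N d x xbar) := by
  have hMsymm : M.IsSymm := hM.1.eq ▸ hM.1
  constructor
  · -- KKT ⇒ minimizer
    rintro ⟨lam, hlam, hstat, hcomp⟩ x hx
    have hdiff := psi_diff' M N hMsymm d x xbar
    rw [← hQMN] at hdiff
    set u := x - xbar with hu
    have hquad : 0 ≤ u ⬝ᵥ M *ᵥ u := by simpa using hM.dotProduct_mulVec_nonneg u
    have hlin : u ⬝ᵥ (Q *ᵥ xbar + d) = -((A *ᵥ u) ⬝ᵥ lam) := by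
      rw [hstat, dotProduct_neg, dotProduct_mulVec, vecMul_transpose]
    have hsplit : (A *ᵥ u) ⬝ᵥ lam
        = (A *ᵥ x - b) ⬝ᵥ lam - (A *ᵥ xbar - b) ⬝ᵥ lam := by
      rw [hu, Matrix.mulVec_sub]
      simp only [sub_dotProduct]
      ring
    have hle : (A *ᵥ x - b) ⬝ᵥ lam ≤ 0 := by
      apply Finset.sum_nonpos
      intro i _
      exact mul_nonpos_of_nonpos_of_nonneg (by simpa using sub_nonpos.mpr (hx i)) (hlam i)
    rw [hcomp, sub_zero] at hsplit
    linarith [hdiff, hlin, hsplit, hquad, hle]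
  · -- minimizer ⇒ KKT
    intro hmin
    set g : Fin n → ℝ := Q *ᵥ xbar + d with hg
    -- Step 1: first-order condition
    have step1 : ∀ x : Fin n → ℝ, A *ᵥ x ≤ b → 0 ≤ (x - xbar) ⬝ᵥ g := by
      intro x hx
      set u := x - xbar with hu
      set q := u ⬝ᵥ M *ᵥ u with hqdef
      set s := u ⬝ᵥ g with hsdef
      have hq : 0 ≤ q := by simpa using hM.dotProduct_mulVec_nonneg u
      by_contra hneg
      push_neg at hneg
      set t := min 1 (-s / (q + 1)) with ht
      have ht0 : 0 < t :=
        lt_min one_pos (div_pos (neg_pos.mpr hneg) (by linarith))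
      have ht1 : t ≤ 1 := min_le_left _ _
      have ht2' : t * (q + 1) ≤ -s :=
        (le_div_iff₀ (by linarith : (0:ℝ) < q + 1)).mp (min_le_right _ _)
      have hfeas' : A *ᵥ (xbar + t • u) ≤ b := by
        intro i
        have h1 := hfeas i
        have h2 := hx i
        have hexp : (A *ᵥ (xbar + t • u)) i
            = (A *ᵥ xbar) i + t * ((A *ᵥ x) i - (A *ᵥ xbar) i) := by
          rw [Matrix.mulVec_add, Matrix.mulVec_smul, hu, Matrix.mulVec_sub]
          simp [smul_eq_mul]
        rw [hexp]
        nlinarith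
      have hmin' := hmin _ hfeas'
      have hdiff := psi_diff' M N hMsymm d (xbar + t • u) xbar
      rw [← hQMN, add_sub_cancel_left] at hdiff
      have e1 : (t • u) ⬝ᵥ M *ᵥ (t • u) = t ^ 2 * q := by
        rw [Matrix.mulVec_smul]
        simp only [smul_dotProduct, dotProduct_smul, smul_eq_mul, hqdef]
        ring
      have e2 : (t • u) ⬝ᵥ (Q *ᵥ xbar + d) = t * s := by
        simp only [smul_dotProduct, smul_eq_mul, hsdef, hg]
      rw [e1, e2] at hdiff
      have h0 : 0 ≤ (1/2 : ℝ) * (t ^ 2 * q) + t * s := by linarith [hdiff, hmin']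
      nlinarith [mul_le_mul_of_nonneg_left ht2' ht0.le, mul_pos ht0 ht0,
        mul_nonneg (mul_nonneg ht0.le ht0.le) hq]
    -- Step 2: cone condition for active constraints
    classical
    set act : Fin m → Prop := fun i => (A *ᵥ xbar) i = b i with hact
    set a' : Fin m → (Fin n → ℝ) := fun i => if act i then A i else 0 with ha'
    have cone : ∀ v : Fin n → ℝ, (∀ i, a' i ⬝ᵥ v ≤ 0) → (-g) ⬝ᵥ v ≤ 0 := by
      intro v hv
      have hactive : ∀ i, act i → (A *ᵥ v) i ≤ 0 := by
        intro i hi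
        have h := hv i
        simp only [ha'] at h
        rw [if_pos hi] at h
        exact h
      set e : Fin m → ℝ := fun i =>
        if (A *ᵥ v) i ≤ 0 then 1 else (b i - (A *ᵥ xbar) i) / ((A *ᵥ v) i) with he
      have hepos : ∀ i, 0 < e i := by
        intro i
        simp only [he]
        split_ifs with h
        · exact one_pos
        · push_neg at h
          have hinact : ¬ act i := fun hc => absurd (hactive i hc) (not_le.mpr h)
          have : (A *ᵥ xbar) i < b i := lt_of_le_of_ne (hfeas i) hinact
          exact div_pos (by linarith) h
      set ε : ℝ := Finset.univ.fold min 1 e with hε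
      have hεpos : 0 < ε := by
        rw [hε, Finset.lt_fold_min]
        exact ⟨one_pos, fun i _ => hepos i⟩
      have hεle : ∀ i, ε ≤ e i := by
        intro i
        rw [hε]
        exact (Finset.fold_min_le (e i)).mpr (Or.inr ⟨i, Finset.mem_univ i, le_rfl⟩)
      have hfeas' : A *ᵥ (xbar + ε • v) ≤ b := by
        intro i
        have hexp : (A *ᵥ (xbar + ε • v)) i = (A *ᵥ xbar) i + ε * (A *ᵥ v) i := by
          rw [Matrix.mulVec_add, Matrix.mulVec_smul]
          simp [smul_eq_mul]
        rw [hexp]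
        by_cases h : (A *ᵥ v) i ≤ 0
        · have : ε * (A *ᵥ v) i ≤ 0 := mul_nonpos_of_nonneg_of_nonpos hεpos.le h
          linarith [hfeas i]
        · push_neg at h
          have hei : e i = (b i - (A *ᵥ xbar) i) / ((A *ᵥ v) i) := by
            rw [he]; simp [not_le.mpr h]
          have := hεle i
          rw [hei] at this
          have := (le_div_iff₀ h).mp this
          linarith
      have := step1 _ hfeas'
      rw [add_sub_cancel_left] at this
      have h2 : 0 ≤ ε * (v ⬝ᵥ g) := by
        simpa [smul_dotProduct, smul_eq_mul] using this
      have h3 : 0 ≤ v ⬝ᵥ g := by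
        by_contra hcon
        push_neg at hcon
        nlinarith
      rw [neg_dotProduct, dotProduct_comm]
      linarith
    -- Step 3: apply Farkas
    obtain ⟨μ, hμ, hsum⟩ := farkas_aux a' (-g) cone
    set lam : Fin m → ℝ := fun i => if act i then μ i else 0 with hlam
    refine ⟨lam, ?_, ?_, ?_⟩
    · intro i
      rw [hlam]
      simp only [Pi.zero_apply]
      split_ifs with h
      · exact hμ i
      · exact le_rfl
    · have hAT : Aᵀ *ᵥ lam = ∑ i, μ i • a' i := by
        funext j
        rw [Matrix.mulVec, dotProduct]
        rw [Finset.sum_apply]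
        refine Finset.sum_congr rfl fun i _ => ?_
        simp only [transpose_apply, hlam, ha', Pi.smul_apply, smul_eq_mul]
        split_ifs with h
        · ring
        · simp
      rw [hAT, ← hsum, hg]
      simp
    · rw [dotProduct]
      apply Finset.sum_eq_zero
      intro i _
      rw [hlam]
      simp only [Pi.sub_apply]
      split_ifs with h
      · rw [hact] at h
        simp [h]
      · simp
end

section
/- Let Q be a symmetric n×n real matrix, d ∈ ℝⁿ, A ∈ ℝ^{m×n}, b ∈ ℝᵐ, and let M, N be symmetric positive semidefinite n×n matrices with Q = M − N. Define Ψ(x, x̃) := ½xᵀMx + ½x̃ᵀMx̃ + dᵀx + dᵀx̃ − xᵀNx̃ and Φ(x) := xᵀQx + 2dᵀx. Let x̃ ∈ F and let x̄ minimize x ↦ Ψ(x, x̃) over F. If Φ(x̄) ≥ Φ(x̃), then x̃ is a KKT point of the QP. -/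
open Matrix

section FarkasAux

variable {n : ℕ}

private lemma dot_self_nonneg' (c : Fin n → ℝ) : (0:ℝ) ≤ c ⬝ᵥ c :=
  Finset.sum_nonneg fun _ _ => mul_self_nonneg _

private lemma symm_dot {M : Matrix (Fin n) (Fin n) ℝ} (hM : M.IsSymm) (x y : Fin n → ℝ) :
    x ⬝ᵥ (M *ᵥ y) = y ⬝ᵥ (M *ᵥ x) := by
  rw [dotProduct_mulVec]; nth_rewrite 1 [← hM]
  rw [vecMul_transpose, dotProduct_comm]

private lemma isSymm_of_posSemidef {M : Matrix (Fin n) (Fin n) ℝ} (hM : M.PosSemidef) :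
    M.IsSymm := by
  have h := hM.1
  rw [Matrix.IsHermitian] at h
  ext i j
  rw [transpose_apply]
  have h2 := congrFun (congrFun h i) j
  simpa [conjTranspose_apply] using h2

/-- Farkas' lemma (cone version), by induction on the number of generators. -/
private lemma farkas : ∀ (m : ℕ) (a : Fin m → Fin n → ℝ) (c : Fin n → ℝ),
    (∀ v : Fin n → ℝ, (∀ i, a i ⬝ᵥ v ≤ 0) → c ⬝ᵥ v ≤ 0) →
    ∃ lam : Fin m → ℝ, (∀ i, 0 ≤ lam i) ∧ c = ∑ i, lam i • a i := by
  intro m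
  induction m with
  | zero =>
    intro a c h
    refine ⟨0, fun i => le_rfl, ?_⟩
    have hc : c ⬝ᵥ c ≤ 0 := h c (fun i => i.elim0)
    have : c = 0 := dotProduct_self_eq_zero.mp (le_antisymm hc (dot_self_nonneg' c))
    simp [this]
  | succ m ih =>
    intro a c h
    by_cases hcase : ∀ v : Fin n → ℝ, (∀ i : Fin m, a i.castSucc ⬝ᵥ v ≤ 0) → c ⬝ᵥ v ≤ 0
    · obtain ⟨mu, hmu0, hmu⟩ := ih (fun i => a i.castSucc) c hcase
      refine ⟨Fin.snoc mu 0, ?_, ?_⟩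
      · intro i
        refine Fin.lastCases ?_ ?_ i <;> simp [Fin.snoc_last, Fin.snoc_castSucc, hmu0]
      · rw [Fin.sum_univ_castSucc]
        simp [Fin.snoc_last, Fin.snoc_castSucc, hmu]
    · push_neg at hcase
      obtain ⟨v, hv, hcv⟩ := hcase
      set aL := a (Fin.last m) with haL
      have hα : 0 < aL ⬝ᵥ v := by
        by_contra hle
        push_neg at hle
        refine absurd (h v ?_) (not_le.mpr hcv)
        intro i
        refine Fin.lastCases ?_ ?_ i
        · exact hle
        · exact hv
      set α := aL ⬝ᵥ v with hαdef
      set ahat : Fin m → Fin n → ℝ :=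
        fun i => α • a i.castSucc - (a i.castSucc ⬝ᵥ v) • aL with hahat
      set chat : Fin n → ℝ := α • c - (c ⬝ᵥ v) • aL with hchat
      have hyp : ∀ w : Fin n → ℝ, (∀ i, ahat i ⬝ᵥ w ≤ 0) → chat ⬝ᵥ w ≤ 0 := by
        intro w hw
        set u : Fin n → ℝ := α • w - (aL ⬝ᵥ w) • v with hu
        have hcu : c ⬝ᵥ u ≤ 0 := by
          apply h
          intro i
          refine Fin.lastCases ?_ ?_ i
          · simp only [hu, dotProduct_sub, dotProduct_smul, smul_eq_mul, ← haL, ← hαdef]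
            ring_nf
            nlinarith [hα]
          · intro i
            have hwi := hw i
            simp only [hahat, sub_dotProduct, smul_dotProduct, smul_eq_mul] at hwi
            simp only [hu, dotProduct_sub, dotProduct_smul, smul_eq_mul]
            nlinarith [hwi]
        simp only [hchat, sub_dotProduct, smul_dotProduct, smul_eq_mul]
        simp only [hu, dotProduct_sub, dotProduct_smul, smul_eq_mul] at hcu
        nlinarith [hcu]
      obtain ⟨mu, hmu0, hmu⟩ := ih ahat chat hyp
      set γ : ℝ := c ⬝ᵥ v - ∑ i, mu i * (a i.castSucc ⬝ᵥ v) with hγ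
      have hγpos : 0 < γ := by
        have hs : ∑ i, mu i * (a i.castSucc ⬝ᵥ v) ≤ 0 := by
          apply Finset.sum_nonpos
          intro i _
          exact mul_nonpos_of_nonneg_of_nonpos (hmu0 i) (hv i)
        simp only [hγ]; linarith
      have h2 : chat = α • (∑ i, mu i • a i.castSucc)
          - (∑ i, mu i * (a i.castSucc ⬝ᵥ v)) • aL := by
        rw [hmu, Finset.sum_congr rfl (fun i _ => by
          show mu i • ahat i = α • (mu i • a i.castSucc) - (mu i * (a i.castSucc ⬝ᵥ v)) • aL
          simp only [hahat]
          module), Finset.sum_sub_distrib, ← Finset.smul_sum, ← Finset.sum_smul]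
      rw [hchat, sub_eq_iff_eq_add] at h2
      have hE : α • c = α • (∑ i, mu i • a i.castSucc) + γ • aL := by
        rw [h2, hγ, sub_smul]
        module
      have hc : c = (∑ i, mu i • a i.castSucc) + (γ / α) • aL := by
        have h3 := congrArg (fun z => α⁻¹ • z) hE
        simp only [smul_add, inv_smul_smul₀ hα.ne', smul_smul] at h3
        rw [h3]
        congr 2
        rw [div_eq_inv_mul]
      refine ⟨Fin.snoc mu (γ / α), ?_, ?_⟩
      · intro i
        refine Fin.lastCases ?_ ?_ i
        · simp only [Fin.snoc_last]
          positivity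
        · intro i; simp [Fin.snoc_castSucc, hmu0 i]
      · rw [Fin.sum_univ_castSucc]
        simpa [Fin.snoc_last, Fin.snoc_castSucc] using hc

private lemma exists_delta {m : ℕ} (A : Matrix (Fin m) (Fin n) ℝ) (b : Fin m → ℝ)
    (x v : Fin n → ℝ) (hx : A *ᵥ x ≤ b)
    (hv : ∀ i, (A *ᵥ x) i = b i → (A *ᵥ v) i ≤ 0) :
    ∃ δ : ℝ, 0 < δ ∧ ∀ t : ℝ, 0 < t → t ≤ δ → A *ᵥ (x + t • v) ≤ b := by
  have key : ∀ i : Fin m, ∃ δ : ℝ, 0 < δ ∧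
      ∀ t : ℝ, 0 < t → t ≤ δ → (A *ᵥ x) i + t * (A *ᵥ v) i ≤ b i := by
    intro i
    by_cases hpos : 0 < (A *ᵥ v) i
    · have hlt : (A *ᵥ x) i < b i :=
        lt_of_le_of_ne (hx i) (fun he => absurd (hv i he) (not_le.mpr hpos))
      refine ⟨(b i - (A *ᵥ x) i) / (A *ᵥ v) i, div_pos (by linarith) hpos, ?_⟩
      intro t ht hle
      have h2 := (le_div_iff₀ hpos).mp hle
      linarith
    · push_neg at hpos
      refine ⟨1, one_pos, fun t ht _ => ?_⟩
      have h2 : t * (A *ᵥ v) i ≤ 0 := mul_nonpos_of_nonneg_of_nonpos ht.le hpos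
      have h3 := hx i
      linarith
  choose δ hδpos hδ using key
  rcases Nat.eq_zero_or_pos m with hm | hm
  · subst hm
    exact ⟨1, one_pos, fun t ht hle => fun i => i.elim0⟩
  · haveI : Nonempty (Fin m) := ⟨⟨0, hm⟩⟩
    refine ⟨Finset.univ.inf' Finset.univ_nonempty δ, ?_, ?_⟩
    · exact (Finset.lt_inf'_iff _).mpr fun i _ => hδpos i
    · intro t ht hle
      intro i
      have h1 := hδ i t ht (le_trans hle (Finset.inf'_le _ (Finset.mem_univ i)))
      simpa [mulVec_add, mulVec_smul, smul_eq_mul] using h1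

private lemma transpose_mulVec_eq_sum {m : ℕ} (A : Matrix (Fin m) (Fin n) ℝ)
    (lam : Fin m → ℝ) :
    Aᵀ *ᵥ lam = ∑ i, lam i • (fun j => A i j) := by
  funext j
  simp [mulVec, dotProduct, transpose_apply, Finset.sum_apply, mul_comm]

end FarkasAux

/-- The objective `Φ(x) = xᵀQx + 2dᵀx`. -/
noncomputable def Phi {n : ℕ} (Q : Matrix (Fin n) (Fin n) ℝ) (d : Fin n → ℝ)
    (x : Fin n → ℝ) : ℝ :=
  x ⬝ᵥ (Q *ᵥ x) + 2 * (d ⬝ᵥ x)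

/-- Lemma `l:fwer`. Let `Q = M − N` with `M, N ⪰ 0`, `x̃ ∈ F`, and
let `x̄` minimize `x ↦ Ψ(x, x̃)` over `F`. If `Φ(x̄) ≥ Φ(x̃)`, then `x̃` is a KKT
point of the QP. -/
theorem kkt_of_no_descent {n m : ℕ} (Q M N : Matrix (Fin n) (Fin n) ℝ)
    (hQ : Q.IsSymm) (hM : M.PosSemidef) (hN : N.PosSemidef) (hQMN : Q = M - N)
    (d : Fin n → ℝ) (A : Matrix (Fin m) (Fin n) ℝ) (b : Fin m → ℝ)
    (xt : Fin n → ℝ) (hxt : A *ᵥ xt ≤ b)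
    (xbar : Fin n → ℝ) (hxbar : A *ᵥ xbar ≤ b)
    (hmin : ∀ x : Fin n → ℝ, A *ᵥ x ≤ b → Psi M N d xbar xt ≤ Psi M N d x xt)
    (hPhi : Phi Q d xt ≤ Phi Q d xbar) :
    ∃ lam : Fin m → ℝ, 0 ≤ lam ∧ Q *ᵥ xt + d = -(Aᵀ *ᵥ lam) ∧
      (A *ᵥ xt - b) ⬝ᵥ lam = 0 := by
  have hMs : M.IsSymm := isSymm_of_posSemidef hM
  have hNs : N.IsSymm := isSymm_of_posSemidef hN
  set c : Fin n → ℝ := Q *ᵥ xt + d with hcdef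
  -- Step 1 : x̃ also minimizes Ψ(·, x̃) over F
  have hPsiSelf : Psi M N d xt xt = Phi Q d xt := by
    simp only [Psi, Phi, hQMN, sub_mulVec, dotProduct_sub]
    ring
  have hPsiLower : (1/2)*Phi Q d xbar + (1/2)*Phi Q d xt ≤ Psi M N d xbar xt := by
    have hid : Psi M N d xbar xt = (1/2)*Phi Q d xbar + (1/2)*Phi Q d xt
        + (1/2)*((xbar - xt) ⬝ᵥ (N *ᵥ (xbar - xt))) := by
      simp only [Psi, Phi, hQMN, sub_mulVec, mulVec_sub, dotProduct_sub, sub_dotProduct]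
      rw [symm_dot hNs xt xbar]
      ring
    have hpsd : 0 ≤ (xbar - xt) ⬝ᵥ (N *ᵥ (xbar - xt)) := by simpa [star_trivial] using hN.dotProduct_mulVec_nonneg (xbar - xt)
    rw [hid]
    linarith
  have key : ∀ x, A *ᵥ x ≤ b → Phi Q d xt ≤ Psi M N d x xt := by
    intro x hx
    have h1 := hmin x hx
    linarith
  -- Step 2 : first-order inequality for feasible perturbations of x̃
  have hineq : ∀ w, A *ᵥ (xt + w) ≤ b → 0 ≤ (1/2)*(w ⬝ᵥ (M *ᵥ w)) + w ⬝ᵥ c := by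
    intro w hw
    have h1 := key (xt + w) hw
    have h2 : Psi M N d (xt + w) xt
        = Psi M N d xt xt + (1/2)*(w ⬝ᵥ (M *ᵥ w)) + w ⬝ᵥ c := by
      simp only [Psi, hcdef, hQMN, sub_mulVec, mulVec_add, dotProduct_add, add_dotProduct,
        dotProduct_sub]
      rw [symm_dot hMs xt w, dotProduct_comm d w]
      ring
    rw [h2, hPsiSelf] at h1
    linarith
  -- Step 3 : variational inequality over the active cone
  have hvar : ∀ v, (∀ i, (A *ᵥ xt) i = b i → (A *ᵥ v) i ≤ 0) → 0 ≤ v ⬝ᵥ c := by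
    intro v hv
    obtain ⟨δ, hδ, hfe⟩ := exists_delta A b xt v hxt hv
    by_contra hneg
    push_neg at hneg
    set q : ℝ := (1/2)*(v ⬝ᵥ (M *ᵥ v)) with hq
    have hq0 : 0 ≤ q := by
      have hMv : 0 ≤ v ⬝ᵥ (M *ᵥ v) := by simpa [star_trivial] using hM.dotProduct_mulVec_nonneg v
      rw [hq]; linarith
    set t : ℝ := min δ ((-(v ⬝ᵥ c))/(q+1)) with ht
    have ht0 : 0 < t := lt_min hδ (div_pos (by linarith) (by linarith))
    have hfeas := hfe t ht0 (min_le_left _ _)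
    have h1 := hineq (t • v) hfeas
    have h2 : (1/2)*((t • v) ⬝ᵥ (M *ᵥ (t • v))) + (t • v) ⬝ᵥ c
        = t * (t * q + v ⬝ᵥ c) := by
      simp only [mulVec_smul, smul_dotProduct, dotProduct_smul, smul_eq_mul, hq]
      ring
    rw [h2] at h1
    have h3 : 0 ≤ t * q + v ⬝ᵥ c := by
      by_contra h4
      push_neg at h4
      nlinarith
    have htle : t ≤ (-(v ⬝ᵥ c))/(q+1) := min_le_right _ _
    have h5 : t * (q+1) ≤ -(v ⬝ᵥ c) := (le_div_iff₀ (by linarith)).mp htle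
    nlinarith
  -- Step 4 : Farkas' lemma applied to the active rows
  classical
  set a' : Fin m → Fin n → ℝ :=
    fun i => if (A *ᵥ xt) i = b i then (fun j => A i j) else 0 with ha'
  have hfk : ∀ v : Fin n → ℝ, (∀ i, a' i ⬝ᵥ v ≤ 0) → (-c) ⬝ᵥ v ≤ 0 := by
    intro v hvv
    have hactive : ∀ i, (A *ᵥ xt) i = b i → (A *ᵥ v) i ≤ 0 := by
      intro i hi
      have h1 := hvv i
      simp only [ha', hi, if_pos] at h1
      simpa [mulVec, dotProduct] using h1
    have h2 := hvar v hactive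
    have h3 : (-c) ⬝ᵥ v = -(v ⬝ᵥ c) := by rw [neg_dotProduct, dotProduct_comm]
    rw [h3]
    linarith
  obtain ⟨lam0, hlam0, hsum⟩ := farkas m a' (-c) hfk
  refine ⟨fun i => if (A *ᵥ xt) i = b i then lam0 i else 0, ?_, ?_, ?_⟩
  · intro i
    by_cases hi : (A *ᵥ xt) i = b i <;> simp [hi, hlam0 i]
  · have hAT : Aᵀ *ᵥ (fun i => if (A *ᵥ xt) i = b i then lam0 i else 0)
        = ∑ i, (if (A *ᵥ xt) i = b i then lam0 i else 0) • (fun j => A i j) :=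
      transpose_mulVec_eq_sum A _
    have hterm : ∀ i : Fin m,
        (if (A *ᵥ xt) i = b i then lam0 i else 0) • (fun j => A i j) = lam0 i • a' i := by
      intro i
      by_cases hi : (A *ᵥ xt) i = b i <;> simp [ha', hi]
    rw [hAT, Finset.sum_congr rfl (fun i _ => hterm i), ← hsum]
    rw [hcdef]
    simp
  · have : ∀ i : Fin m,
        ((A *ᵥ xt) i - b i) * (if (A *ᵥ xt) i = b i then lam0 i else 0) = 0 := by
      intro i
      by_cases hi : (A *ᵥ xt) i = b i <;> simp [hi]
    simp only [dotProduct, Pi.sub_apply]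
    exact Finset.sum_eq_zero fun i _ => this i
end

section
/- Let Q be a symmetric n×n real matrix, A ∈ ℝ^{m×n} with m ≥ n, and suppose the matrix A_{1:n} formed by the first n rows of A is invertible. Let R := (A_{1:n}^{-1})ᵀ Q A_{1:n}^{-1} and let 1 ≤ k < n. If pᵀQp > 0 for every nonzero p ∈ ℝⁿ with A_{1:k} p = 0 (where A_{1:k} is the matrix of the first k rows of A), then the bottom-right (n−k)×(n−k) block R₂₂ := R_{k+1:n, k+1:n} is positive definite. -/
open Matrix

/-- Let `A_{1:n}` (the first `n` rows of `A`) be invertible and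
`R := (A_{1:n}⁻¹)ᵀ Q A_{1:n}⁻¹`. If `Q` is positive definite on the null space of
the first `k` rows of `A` (`1 ≤ k < n`), then the bottom-right
`(n−k) × (n−k)` block `R₂₂` of `R` is positive definite. -/
theorem bottom_right_block_posDef {n m k : ℕ} (hmn : n ≤ m)
    (hk1 : 1 ≤ k) (hkn : k < n)
    (Q : Matrix (Fin n) (Fin n) ℝ) (hQ : Q.IsSymm)
    (A : Matrix (Fin m) (Fin n) ℝ)
    (hinv : IsUnit (A.submatrix (Fin.castLE hmn) id).det)
    (hpd : ∀ p : Fin n → ℝ, p ≠ 0 →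
      (∀ i : Fin m, (i : ℕ) < k → (A *ᵥ p) i = 0) → 0 < p ⬝ᵥ (Q *ᵥ p)) :
    ((((A.submatrix (Fin.castLE hmn) id)⁻¹)ᵀ * Q *
        (A.submatrix (Fin.castLE hmn) id)⁻¹).submatrix
      (fun i : Fin (n - k) => (⟨k + (i : ℕ), by have := i.2; omega⟩ : Fin n))
      (fun j : Fin (n - k) => (⟨k + (j : ℕ), by have := j.2; omega⟩ : Fin n))).PosDef := by
  set B := A.submatrix (Fin.castLE hmn) id with hB
  set R := (B⁻¹)ᵀ * Q * B⁻¹ with hR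
  have hQherm : Q.IsHermitian := by
    rw [Matrix.IsHermitian]
    ext i j
    simpa [Matrix.conjTranspose_apply] using congrFun (congrFun hQ i) j
  have hRherm : R.IsHermitian := by
    have := Matrix.isHermitian_conjTranspose_mul_mul (B⁻¹) hQherm
    simpa [hR, Matrix.conjTranspose_eq_transpose_of_trivial] using this
  set e : Fin (n - k) → Fin n :=
    fun i => (⟨k + (i : ℕ), by have := i.2; omega⟩ : Fin n) with he
  have heinj : Function.Injective e := by
    intro a b hab
    have : k + (a : ℕ) = k + (b : ℕ) := congrArg Fin.val hab
    exact Fin.ext (by omega)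
  rw [Matrix.posDef_iff_dotProduct_mulVec]
  constructor
  · exact hRherm.submatrix e
  · intro y hy
    -- extend y by zeros
    set z : Fin n → ℝ := fun j =>
      if h : k ≤ (j : ℕ) then y ⟨(j : ℕ) - k, by have := j.2; omega⟩ else 0 with hz
    have hze : ∀ i : Fin (n - k), z (e i) = y i := by
      intro i
      simp only [hz, he]
      rw [dif_pos (Nat.le_add_right k i)]
      congr 1
      exact Fin.ext (by simp)
    have hzlt : ∀ j : Fin n, (j : ℕ) < k → z j = 0 := by
      intro j hj
      simp only [hz]
      rw [dif_neg (by omega)]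
    -- key summation lemma
    have key : ∀ f : Fin n → ℝ, ∑ j, z j * f j = ∑ i : Fin (n - k), y i * f (e i) := by
      intro f
      have hsub : ∑ j, z j * f j = ∑ j ∈ Finset.univ.image e, z j * f j := by
        refine (Finset.sum_subset (Finset.subset_univ _) ?_).symm
        intro j _ hj
        have hjk : (j : ℕ) < k := by
          by_contra h
          push_neg at h
          refine hj (Finset.mem_image.mpr ⟨⟨(j : ℕ) - k, by have := j.2; omega⟩,
            Finset.mem_univ _, ?_⟩)
          exact Fin.ext (by simp [he]; omega)
        rw [hzlt j hjk, zero_mul]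
      rw [hsub, Finset.sum_image (fun a _ b _ h => heinj h)]
      exact Finset.sum_congr rfl fun i _ => by rw [hze]
    -- the quadratic form equals z ⬝ᵥ R z
    have hquad : y ⬝ᵥ ((R.submatrix e e) *ᵥ y) = z ⬝ᵥ (R *ᵥ z) := by
      rw [dotProduct, dotProduct, key (fun j => (R *ᵥ z) j)]
      refine Finset.sum_congr rfl fun i _ => ?_
      congr 1
      rw [Matrix.mulVec, Matrix.mulVec]
      simp only [dotProduct, Matrix.submatrix_apply]
      rw [show (∑ j, R (e i) j * z j) = ∑ j, z j * R (e i) j from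
        Finset.sum_congr rfl fun j _ => mul_comm _ _, key (fun j => R (e i) j)]
      exact Finset.sum_congr rfl fun j _ => mul_comm _ _
    set p : Fin n → ℝ := B⁻¹ *ᵥ z with hp
    have hBp : B *ᵥ p = z := by
      rw [hp, Matrix.mulVec_mulVec, Matrix.mul_nonsing_inv _ hinv, Matrix.one_mulVec]
    have hquad2 : z ⬝ᵥ (R *ᵥ z) = p ⬝ᵥ (Q *ᵥ p) := by
      rw [hR, Matrix.mul_assoc, ← Matrix.mulVec_mulVec, Matrix.dotProduct_mulVec,
        Matrix.vecMul_transpose, ← Matrix.mulVec_mulVec]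
    have hzne : z ≠ 0 := by
      intro h
      apply hy
      funext i
      have := hze i
      rw [h] at this
      simpa using this.symm
    have hpne : p ≠ 0 := by
      intro h
      rw [h, Matrix.mulVec_zero] at hBp
      exact hzne hBp.symm
    have hAk : ∀ i : Fin m, (i : ℕ) < k → (A *ᵥ p) i = 0 := by
      intro i hi
      have hin : (i : ℕ) < n := lt_trans hi hkn
      have hcast : Fin.castLE hmn ⟨(i : ℕ), hin⟩ = i := Fin.ext rfl
      have h1 : (A *ᵥ p) i = (B *ᵥ p) ⟨(i : ℕ), hin⟩ := by
        simp [hB, Matrix.mulVec, dotProduct, Matrix.submatrix_apply, hcast]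
      rw [h1, hBp]
      exact hzlt _ hi
    have hpos := hpd p hpne hAk
    have : y ⬝ᵥ ((R.submatrix e e) *ᵥ y) > 0 := by
      rw [hquad, hquad2]; exact hpos
    simpa using this
end
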